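/- Fix an integer J ≥ 1 and reals α > 0, Σ₀ > 0. For x > 0, let P₀(x,·) denote the law of G / (Σ₀ + Z²/(2x)), where G ~ Gamma(α + J/2, 1) and Z ~ N(0,1) are independent. Then for all positive x and y, d_TV(P₀(x,·), P₀(y,·)) ≤ |x − y| / max{x, y}. -/

import Mathlib

open MeasureTheory ProbabilityTheory
open scoped ENNReal

/-- Total variation distance between two measures:
the supremum over measurable sets `A` of `|μ A - ν A|`. -/
noncomputable def tvDist {χ : Type*} [MeasurableSpace χ] (μ ν : Measure χ) : ℝ :=
  ⨆ A : {s : Set χ // MeasurableSet s}, |(μ A.1).toReal - (ν A.1).toReal|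

/-- The transition kernel `P₀(x,·)` of the Normal Gibbs sampler with `K = 0`:
the law of `G / (S₀ + Z²/(2x))` where `G ~ Gamma(α + J/2, 1)` and `Z ~ N(0,1)`
are independent. -/
noncomputable def gibbsP0 (J : ℕ) (α S₀ : ℝ) (x : ℝ) : Measure ℝ :=
  ((gammaMeasure (α + J / 2) 1).prod (gaussianReal 0 1)).map
    (fun gz => gz.1 / (S₀ + gz.2 ^ 2 / (2 * x)))

namespace Stmt7Aux

open Real NNReal

lemma gauss_reparam (x : ℝ) (hx : 0 < x) :
    (gaussianReal 0 1).map (fun z => (Real.sqrt x)⁻¹ * z) = gaussianReal 0 x.toNNReal⁻¹ := by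
  rw [show (fun z => (Real.sqrt x)⁻¹ * z) = ((Real.sqrt x)⁻¹ * ·) from rfl,
    gaussianReal_map_const_mul]
  congr 1
  · ring
  · ext
    simp [Real.sq_sqrt hx.le, NNReal.coe_inv, Real.coe_toNNReal _ hx.le]

lemma gauss_pdf_le {x y : ℝ} (hx : 0 < x) (hxy : x ≤ y) (z : ℝ) :
    Real.sqrt (x / y) * gaussianPDFReal 0 y.toNNReal⁻¹ z ≤ gaussianPDFReal 0 x.toNNReal⁻¹ z := by
  have hy : 0 < y := hx.trans_le hxy
  simp only [gaussianPDFReal, sub_zero]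
  have hcx : ((x.toNNReal⁻¹ : ℝ≥0) : ℝ) = x⁻¹ := by
    simp [NNReal.coe_inv, Real.coe_toNNReal _ hx.le]
  have hcy : ((y.toNNReal⁻¹ : ℝ≥0) : ℝ) = y⁻¹ := by
    simp [NNReal.coe_inv, Real.coe_toNNReal _ hy.le]
  rw [hcx, hcy, ← mul_assoc]
  have hcoef : Real.sqrt (x / y) * (Real.sqrt (2 * π * y⁻¹))⁻¹
      = (Real.sqrt (2 * π * x⁻¹))⁻¹ := by
    rw [← Real.sqrt_inv, ← Real.sqrt_inv, ← Real.sqrt_mul (by positivity)]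
    congr 1
    field_simp
  rw [hcoef]
  refine mul_le_mul_of_nonneg_left (Real.exp_le_exp.2 ?_) (by positivity)
  rw [neg_div, neg_div, neg_le_neg_iff]
  gcongr

lemma invNN_ne_zero {x : ℝ} (hx : 0 < x) : x.toNNReal⁻¹ ≠ 0 := by
  simp only [ne_eq, inv_eq_zero, Real.toNNReal_eq_zero, not_le]
  exact hx

lemma gauss_meas_le {x y : ℝ} (hx : 0 < x) (hxy : x ≤ y) :
    ENNReal.ofReal (Real.sqrt (x / y)) • gaussianReal 0 y.toNNReal⁻¹
      ≤ gaussianReal 0 x.toNNReal⁻¹ := by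
  have hy : 0 < y := hx.trans_le hxy
  rw [gaussianReal_of_var_ne_zero _ (invNN_ne_zero hx),
    gaussianReal_of_var_ne_zero _ (invNN_ne_zero hy),
    ← withDensity_smul _ (measurable_gaussianPDF _ _)]
  refine withDensity_mono (Filter.Eventually.of_forall fun z => ?_)
  simp only [Pi.smul_apply, smul_eq_mul, gaussianPDF]
  rw [← ENNReal.ofReal_mul (Real.sqrt_nonneg _)]
  exact ENNReal.ofReal_le_ofReal (gauss_pdf_le hx hxy z)

lemma F_measurable (S₀ c : ℝ) :
    Measurable (fun gz : ℝ × ℝ => gz.1 / (S₀ + gz.2 ^ 2 / c)) :=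
  measurable_fst.div (measurable_const.add ((measurable_snd.pow_const 2).div_const c))

lemma gibbs_reparam (J : ℕ) (α S₀ : ℝ) (hα : 0 < α) {x : ℝ} (hx : 0 < x) :
    gibbsP0 J α S₀ x
      = ((gammaMeasure (α + J / 2) 1).prod (gaussianReal 0 x.toNNReal⁻¹)).map
          (fun gz => gz.1 / (S₀ + gz.2 ^ 2 / 2)) := by
  have ha : 0 < α + J / 2 := by positivity
  haveI := isProbabilityMeasure_gammaMeasure ha one_pos
  rw [gibbsP0, ← gauss_reparam x hx]
  have hg : Measurable (fun z : ℝ => (Real.sqrt x)⁻¹ * z) := measurable_id.const_mul _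
  rw [show gammaMeasure (α + J / 2) 1
      = (gammaMeasure (α + J / 2) 1).map id from (Measure.map_id).symm]
  rw [Measure.map_prod_map _ _ measurable_id hg, Measure.map_id,
    Measure.map_map (F_measurable S₀ 2) (measurable_id.prodMap hg)]
  congr 1
  funext gz
  simp only [Function.comp_apply, Prod.map_apply, Prod.map_snd, Prod.map, id_eq]
  congr 1
  rw [show ((√x)⁻¹ * gz.2) ^ 2 = ((√x)⁻¹) ^ 2 * gz.2 ^ 2 from by ring, inv_pow,
    Real.sq_sqrt hx.le]
  ring

lemma gibbs_le (J : ℕ) (α S₀ : ℝ) (hα : 0 < α) {x y : ℝ} (hx : 0 < x) (hxy : x ≤ y)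
    (s : Set ℝ) :
    ENNReal.ofReal (Real.sqrt (x / y)) * gibbsP0 J α S₀ y s ≤ gibbsP0 J α S₀ x s := by
  have hy : 0 < y := hx.trans_le hxy
  have ha : 0 < α + J / 2 := by positivity
  haveI := isProbabilityMeasure_gammaMeasure ha one_pos
  suffices h : ENNReal.ofReal (Real.sqrt (x / y)) • gibbsP0 J α S₀ y ≤ gibbsP0 J α S₀ x by
    simpa using h s
  rw [gibbs_reparam J α S₀ hα hx, gibbs_reparam J α S₀ hα hy, ← Measure.map_smul]
  refine Measure.map_mono ?_ (F_measurable S₀ 2)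
  rw [Measure.le_iff]
  intro t ht
  rw [Measure.smul_apply, Measure.prod_apply ht, Measure.prod_apply ht, smul_eq_mul,
    ← lintegral_const_mul _ (measurable_measure_prodMk_left ht)]
  refine lintegral_mono fun g => ?_
  have := gauss_meas_le hx hxy (Prod.mk g ⁻¹' t)
  simpa using this

lemma gibbs_prob (J : ℕ) (α S₀ : ℝ) (hα : 0 < α) (x : ℝ) :
    IsProbabilityMeasure (gibbsP0 J α S₀ x) := by
  have ha : 0 < α + J / 2 := by positivity
  haveI := isProbabilityMeasure_gammaMeasure ha one_pos
  rw [gibbsP0]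
  exact Measure.isProbabilityMeasure_map (F_measurable S₀ (2 * x)).aemeasurable

lemma tvDist_symm {χ : Type*} [MeasurableSpace χ] (μ ν : Measure χ) :
    tvDist μ ν = tvDist ν μ := by
  unfold tvDist
  congr 1
  funext A
  rw [abs_sub_comm]

lemma main (J : ℕ) (α S₀ : ℝ) (hα : 0 < α) (hS₀ : 0 < S₀) {x y : ℝ}
    (hx : 0 < x) (hxy : x ≤ y) :
    tvDist (gibbsP0 J α S₀ x) (gibbsP0 J α S₀ y) ≤ |x - y| / max x y := by
  have hy : 0 < y := hx.trans_le hxy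
  haveI hPx := gibbs_prob J α S₀ hα x
  haveI hPy := gibbs_prob J α S₀ hα y
  set c : ℝ := Real.sqrt (x / y) with hc
  have hdiv1 : x / y ≤ 1 := (div_le_one hy).2 hxy
  have hc0 : 0 ≤ c := Real.sqrt_nonneg _
  have hc1 : c ≤ 1 := Real.sqrt_le_one.2 hdiv1
  have hcge : x / y ≤ c := by
    nlinarith [Real.sq_sqrt (show (0:ℝ) ≤ x / y by positivity)]
  have hRHS : |x - y| / max x y = 1 - x / y := by
    rw [abs_sub_comm, abs_of_nonneg (by linarith), max_eq_right hxy]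
    field_simp
  rw [hRHS]
  refine Real.iSup_le (fun A => ?_) (by linarith)
  obtain ⟨A, hA⟩ := A
  -- real-valued measures of A and its complement
  set a : ℝ := ((gibbsP0 J α S₀ x) A).toReal with hadef
  set b : ℝ := ((gibbsP0 J α S₀ y) A).toReal with hbdef
  have key : ∀ s : Set ℝ,
      c * ((gibbsP0 J α S₀ y) s).toReal ≤ ((gibbsP0 J α S₀ x) s).toReal := by
    intro s
    have h := gibbs_le J α S₀ hα hx hxy s
    have h2 := ENNReal.toReal_mono (measure_ne_top _ _) h
    rwa [ENNReal.toReal_mul, ENNReal.toReal_ofReal hc0] at h2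
  have hcompl : ∀ (μ : Measure ℝ) [IsProbabilityMeasure μ],
      (μ Aᶜ).toReal = 1 - (μ A).toReal := by
    intro μ hμ
    rw [prob_compl_eq_one_sub hA, ENNReal.toReal_sub_of_le prob_le_one ENNReal.one_ne_top,
      ENNReal.toReal_one]
  have hb1 : b ≤ 1 := by
    rw [hbdef]
    exact (ENNReal.toReal_mono ENNReal.one_ne_top prob_le_one).trans_eq ENNReal.toReal_one
  have hb0 : 0 ≤ b := ENNReal.toReal_nonneg
  have ha1 : a ≤ 1 := by
    rw [hadef]
    exact (ENNReal.toReal_mono ENNReal.one_ne_top prob_le_one).trans_eq ENNReal.toReal_one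
  have h1 : c * b ≤ a := key A
  have h2 : c * (1 - b) ≤ 1 - a := by
    have := key Aᶜ
    rwa [hcompl (gibbsP0 J α S₀ y), hcompl (gibbsP0 J α S₀ x)] at this
  have habs : |a - b| ≤ 1 - c := by
    rw [abs_sub_le_iff]
    constructor <;> nlinarith
  have : (1 : ℝ) - c ≤ 1 - x / y := by linarith
  exact habs.trans this

end Stmt7Aux

/-- `d_TV(P₀(x,·), P₀(y,·)) ≤ |x − y| / max{x, y}` for all
positive `x, y`. -/
theorem stmt7 (J : ℕ) (hJ : 1 ≤ J) (α S₀ : ℝ) (hα : 0 < α) (hS₀ : 0 < S₀)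
    (x y : ℝ) (hx : 0 < x) (hy : 0 < y) :
    tvDist (gibbsP0 J α S₀ x) (gibbsP0 J α S₀ y) ≤ |x - y| / max x y := by
  rcases le_total x y with h | h
  · exact Stmt7Aux.main J α S₀ hα hS₀ hx h
  · rw [Stmt7Aux.tvDist_symm, abs_sub_comm, max_comm]
    exact Stmt7Aux.main J α S₀ hα hS₀ hy h
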